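/- For a face τ of a polyhedral cone σ ⊆ N, the set τ* = σ∨ ∩ τ⊥ is a face of σ∨, and the map τ ↦ τ* is an inclusion-reversing bijection between the faces of σ and the faces of σ∨. -/

import Mathlib

def IsPolyhedralCone {N : Type*} [AddCommGroup N] [Module ℝ N] (σ : Set N) : Prop :=
  ∃ S : Finset N, σ = {x | ∃ c : N → ℝ, (∀ v, 0 ≤ c v) ∧ x = ∑ v ∈ S, c v • v}

def dualCone {N : Type*} [AddCommGroup N] [Module ℝ N] (σ : Set N) :
    Set (Module.Dual ℝ N) := {u | ∀ v ∈ σ, 0 ≤ u v}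

def IsFaceOf {N : Type*} [AddCommGroup N] [Module ℝ N] (τ σ : Set N) : Prop :=
  ∃ m ∈ dualCone σ, τ = {v | m v = 0} ∩ σ

/-- The annihilator `τ⊥` of a subset of `N`, inside the dual space. -/
def perp {N : Type*} [AddCommGroup N] [Module ℝ N] (τ : Set N) :
    Set (Module.Dual ℝ N) := {u | ∀ x ∈ τ, u x = 0}

/-- The dual cone (in `N`) of a subset of the dual space, via evaluation. -/
def dualConeBack {N : Type*} [AddCommGroup N] [Module ℝ N]
    (C : Set (Module.Dual ℝ N)) : Set N := {v | ∀ u ∈ C, 0 ≤ u v}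

/-- A face of a cone `C` in the dual space: `C ∩ H_x` for `x` in the dual cone of `C`. -/
def IsDualFaceOf {N : Type*} [AddCommGroup N] [Module ℝ N]
    (F C : Set (Module.Dual ℝ N)) : Prop :=
  ∃ x ∈ dualConeBack C, F = {u ∈ C | u x = 0}



open Finset
section Cara
variable {N : Type*} [AddCommGroup N] [Module ℝ N]


lemma dualApply_sum (u : Module.Dual ℝ N) (S : Finset N) (c : N → ℝ) :
    u (∑ v ∈ S, c v • v) = ∑ v ∈ S, c v * u v := by
  rw [map_sum]; exact Finset.sum_congr rfl fun v _ => by simp [smul_eq_mul]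

lemma caratheodory_cone (S : Finset N) (x : N)
    (hx : ∃ c : N → ℝ, (∀ v, 0 ≤ c v) ∧ x = ∑ v ∈ S, c v • v) :
    ∃ T ⊆ S, (LinearIndependent ℝ ((↑) : {y // y ∈ T} → N)) ∧
      ∃ c : N → ℝ, (∀ v, 0 ≤ c v) ∧ x = ∑ v ∈ T, c v • v := by
  classical
  induction S using Finset.strongInduction generalizing x with
  | _ S ih =>
  obtain ⟨c, hc, hxc⟩ := hx
  by_cases hli : LinearIndependent ℝ ((↑) : {y // y ∈ S} → N)
  · exact ⟨S, subset_rfl, hli, c, hc, hxc⟩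
  · obtain ⟨g, hg0, i₀, hi₀⟩ := Fintype.not_linearIndependent_iff.mp hli
    set d : N → ℝ := fun v => if h : v ∈ S then g ⟨v, h⟩ else 0 with hd
    have hsum : ∑ v ∈ S, d v • v = 0 := by
      rw [← Finset.sum_coe_sort S fun v => d v • v, ← hg0]
      exact Finset.sum_congr rfl fun i _ => by simp [hd, i.2]
    have key : ∀ d : N → ℝ, (∑ v ∈ S, d v • v = 0) → (∃ v ∈ S, 0 < d v) →
        ∃ T ⊆ S, (LinearIndependent ℝ ((↑) : {y // y ∈ T} → N)) ∧
          ∃ c : N → ℝ, (∀ v, 0 ≤ c v) ∧ x = ∑ v ∈ T, c v • v := by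
      intro d hsum hpos
      obtain ⟨w, hw, hwpos⟩ := hpos
      have hPne : (S.filter fun v => 0 < d v).Nonempty := ⟨w, Finset.mem_filter.mpr ⟨hw, hwpos⟩⟩
      obtain ⟨v₀, hv₀, hmin⟩ := Finset.exists_min_image _ (fun v => c v / d v) hPne
      rw [Finset.mem_filter] at hv₀
      obtain ⟨hv₀S, hv₀pos⟩ := hv₀
      set t : ℝ := c v₀ / d v₀ with ht
      have htn : 0 ≤ t := div_nonneg (hc v₀) hv₀pos.le
      set c' : N → ℝ := fun v => c v - t * d v with hc'
      have hc'nn : ∀ v ∈ S, 0 ≤ c' v := by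
        intro v hv
        by_cases hdv : 0 < d v
        · have := hmin v (Finset.mem_filter.mpr ⟨hv, hdv⟩)
          have h2 : t * d v ≤ (c v / d v) * d v :=
            mul_le_mul_of_nonneg_right this hdv.le
          rw [div_mul_cancel₀ _ hdv.ne'] at h2
          simp only [hc']; linarith
        · have : t * d v ≤ 0 := mul_nonpos_of_nonneg_of_nonpos htn (not_lt.mp hdv)
          have := hc v
          simp only [hc']; linarith
      have hc'v₀ : c' v₀ = 0 := by
        simp only [hc', ht, div_mul_cancel₀ _ hv₀pos.ne']; ring
      have hxc' : x = ∑ v ∈ S, c' v • v := by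
        have h1 : ∑ v ∈ S, c' v • v = (∑ v ∈ S, c v • v) - t • ∑ v ∈ S, d v • v := by
          rw [Finset.smul_sum, ← Finset.sum_sub_distrib]
          exact Finset.sum_congr rfl fun v _ => by rw [sub_smul, smul_smul]
        rw [h1, hsum, smul_zero, sub_zero, ← hxc]
      have hxe : x = ∑ v ∈ S.erase v₀, c' v • v := by
        rw [hxc', ← Finset.add_sum_erase S _ hv₀S, hc'v₀, zero_smul, zero_add]
      set c'' : N → ℝ := fun v => if v ∈ S.erase v₀ then c' v else 0 with hc''
      have hrep : ∃ cc : N → ℝ, (∀ v, 0 ≤ cc v) ∧ x = ∑ v ∈ S.erase v₀, cc v • v := by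
        refine ⟨c'', fun v => ?_, ?_⟩
        · simp only [hc'']; split
          · exact hc'nn v (Finset.mem_of_mem_erase ‹_›)
          · exact le_refl 0
        · rw [hxe]
          refine Finset.sum_congr rfl fun v hv => ?_
          simp only [hc'']
          rw [if_pos hv]
      obtain ⟨T, hT, hTli, hrep'⟩ := ih (S.erase v₀) (Finset.erase_ssubset hv₀S) x hrep
      exact ⟨T, hT.trans (Finset.erase_subset _ _), hTli, hrep'⟩
    by_cases hex : ∃ v ∈ S, 0 < d v
    · exact key d hsum hex
    · refine key (fun v => -d v)
        (by rw [← neg_eq_zero, ← Finset.sum_neg_distrib] at hsum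
            simpa [neg_smul] using hsum) ⟨i₀, i₀.2, ?_⟩
      have hdi : d ↑i₀ = g i₀ := by simp [hd, i₀.2]
      have h1 : d ↑i₀ ≤ 0 := not_lt.mp (fun h => hex ⟨↑i₀, i₀.2, h⟩)
      have h2 : d ↑i₀ ≠ 0 := hdi ▸ hi₀
      exact neg_pos.mpr (lt_of_le_of_ne h1 h2)
end Cara

lemma isClosed_coneSet_of_li {E : Type*} [NormedAddCommGroup E] [NormedSpace ℝ E]
    [FiniteDimensional ℝ E] (T : Finset E)
    (hli : LinearIndependent ℝ ((↑) : {y // y ∈ T} → E)) :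
    IsClosed {x | ∃ c : E → ℝ, (∀ v, 0 ≤ c v) ∧ x = ∑ v ∈ T, c v • v} := by
  classical
  set f : ({y // y ∈ T} → ℝ) →ₗ[ℝ] E :=
    Fintype.linearCombination ℝ ((↑) : {y // y ∈ T} → E) with hf
  have hker : LinearMap.ker f = ⊥ := by
    rw [LinearMap.ker_eq_bot']
    intro g hg
    have := Fintype.linearIndependent_iff.mp hli g (by
      rw [← hg, hf, Fintype.linearCombination_apply])
    funext i; exact this i
  have hce := LinearMap.isClosedEmbedding_of_injective (f := f) hker
  have hQ : IsClosed {g : {y // y ∈ T} → ℝ | ∀ i, 0 ≤ g i} := by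
    have : {g : {y // y ∈ T} → ℝ | ∀ i, 0 ≤ g i} = ⋂ i, (fun g => g i) ⁻¹' Set.Ici 0 := by
      ext g; simp [Set.mem_iInter]
    rw [this]
    exact isClosed_iInter fun i => IsClosed.preimage (continuous_apply i) isClosed_Ici
  have himg : f '' {g | ∀ i, 0 ≤ g i}
      = {x | ∃ c : E → ℝ, (∀ v, 0 ≤ c v) ∧ x = ∑ v ∈ T, c v • v} := by
    ext x
    constructor
    · rintro ⟨g, hg, rfl⟩
      refine ⟨fun v => if h : v ∈ T then g ⟨v, h⟩ else 0, fun v => ?_, ?_⟩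
      · dsimp only
        split
        · exact hg _
        · exact le_refl 0
      · rw [hf]
        show ∑ i : {y // y ∈ T}, g i • (↑i : E) = _
        rw [← Finset.sum_coe_sort T fun v => (if h : v ∈ T then g ⟨v, h⟩ else 0) • v]
        exact Finset.sum_congr rfl fun i _ => by simp [i.2]
    · rintro ⟨c, hc, rfl⟩
      refine ⟨fun i => c ↑i, fun i => hc _, ?_⟩
      rw [hf]
      show ∑ i : {y // y ∈ T}, c ↑i • (↑i : E) = _
      rw [← Finset.sum_coe_sort T fun v => c v • v]
  rw [← himg]
  exact hce.isClosedMap _ hQ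

lemma isClosed_coneSet {E : Type*} [NormedAddCommGroup E] [NormedSpace ℝ E]
    [FiniteDimensional ℝ E] (S : Finset E) :
    IsClosed {x | ∃ c : E → ℝ, (∀ v, 0 ≤ c v) ∧ x = ∑ v ∈ S, c v • v} := by
  classical
  have heq : {x | ∃ c : E → ℝ, (∀ v, 0 ≤ c v) ∧ x = ∑ v ∈ S, c v • v}
      = ⋃ T ∈ (S.powerset.filter
          (fun T => LinearIndependent ℝ ((↑) : {y // y ∈ T} → E))),
        {x | ∃ c : E → ℝ, (∀ v, 0 ≤ c v) ∧ x = ∑ v ∈ T, c v • v} := by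
    ext x
    simp only [Set.mem_iUnion, Set.mem_setOf_eq, Finset.mem_filter, Finset.mem_powerset]
    constructor
    · intro hx
      obtain ⟨T, hTS, hTli, c, hc, hrep⟩ := caratheodory_cone S x hx
      exact ⟨T, ⟨hTS, hTli⟩, c, hc, hrep⟩
    · rintro ⟨T, ⟨hTS, -⟩, c, hc, rfl⟩
      refine ⟨fun v => if v ∈ T then c v else 0, fun v => ?_, ?_⟩
      · dsimp only; split
        · exact hc _
        · exact le_refl 0
      · rw [← Finset.sum_subset hTS (fun v _ hv => by simp [hv])]
        exact Finset.sum_congr rfl fun v hv => by simp [hv]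
  rw [heq]
  refine isClosed_biUnion_finset fun T hT => ?_
  exact isClosed_coneSet_of_li T (Finset.mem_filter.mp hT).2

lemma farkas {N : Type*} [AddCommGroup N] [Module ℝ N] [FiniteDimensional ℝ N]
    (S : Finset N) (x : N)
    (h : ∀ u : Module.Dual ℝ N, (∀ v ∈ S, 0 ≤ u v) → 0 ≤ u x) :
    ∃ c : N → ℝ, (∀ v, 0 ≤ c v) ∧ x = ∑ v ∈ S, c v • v := by
  classical
  set n := Module.finrank ℝ N with hn
  set E := EuclideanSpace ℝ (Fin n) with hE
  set e : N ≃ₗ[ℝ] E :=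
    (Module.finBasis ℝ N).equivFun.trans
      (WithLp.linearEquiv 2 ℝ (Fin n → ℝ)).symm with he
  set S' : Finset E := S.image e with hS'
  set K : ConvexCone ℝ E :=
    { carrier := {y | ∃ c : E → ℝ, (∀ w, 0 ≤ c w) ∧ y = ∑ w ∈ S', c w • w}
      smul_mem' := by
        rintro r hr y ⟨c, hc, rfl⟩
        refine ⟨fun w => r * c w, fun w => mul_nonneg hr.le (hc w), ?_⟩
        rw [Finset.smul_sum]
        exact Finset.sum_congr rfl fun w _ => (mul_smul r (c w) w).symm
      add_mem' := by
        rintro y ⟨c, hc, rfl⟩ z ⟨c', hc', rfl⟩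
        refine ⟨fun w => c w + c' w, fun w => add_nonneg (hc w) (hc' w), ?_⟩
        rw [← Finset.sum_add_distrib]
        exact Finset.sum_congr rfl fun w _ => (add_smul (c w) (c' w) w).symm } with hK
  have hne : ((K : Set E)).Nonempty :=
    ⟨0, ⟨fun _ => 0, fun _ => le_refl 0, by simp⟩⟩
  have hcl : IsClosed (K : Set E) := isClosed_coneSet S'
  by_cases hmem : e x ∈ K
  · obtain ⟨c, hc, hrep⟩ := hmem
    refine ⟨fun v => c (e v), fun v => hc _, ?_⟩
    have := congrArg e.symm hrep
    rw [e.symm_apply_apply, map_sum] at this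
    rw [this, hS', Finset.sum_image (fun a _ b _ hab => e.injective hab)]
    exact Finset.sum_congr rfl fun v _ => by rw [map_smul, e.symm_apply_apply]
  · exfalso
    obtain ⟨y, hy1, hy2⟩ :=
      ProperCone.hyperplane_separation' (x₀ := e x)
        ({ toSubmodule := K.toPointedCone ⟨fun _ => 0, fun _ => le_refl 0, by simp⟩,
           isClosed' := hcl } : ProperCone ℝ E) (by exact hmem)
    set u : Module.Dual ℝ N := (innerSL ℝ y).toLinearMap ∘ₗ (e : N →ₗ[ℝ] E) with hu
    have hu' : ∀ v ∈ S, 0 ≤ u v := by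
      intro v hv
      have hevK : e v ∈ K := by
        refine ⟨fun w => if w = e v then 1 else 0, fun w => by dsimp only; split <;> norm_num, ?_⟩
        have h1 : ∀ w : E, (if w = e v then (1:ℝ) else 0) • w = if w = e v then w else 0 :=
          fun w => by split <;> simp
        calc e v = if e v ∈ S' then e v else 0 := by
              rw [if_pos (Finset.mem_image_of_mem e hv)]
          _ = ∑ w ∈ S', if w = e v then w else 0 := (Finset.sum_ite_eq' S' (e v) id).symm
          _ = ∑ w ∈ S', (fun w => if w = e v then (1:ℝ) else 0) w • w :=
              Finset.sum_congr rfl fun w _ => (h1 w).symm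
      have := hy1 _ hevK
      rw [real_inner_comm] at this
      exact this
    have hux : u x = inner ℝ y (e x) := rfl
    exact (not_le.mpr hy2) (by rw [real_inner_comm, ← hux]; exact h u hu')

lemma self_mem_coneSet {N : Type*} [AddCommGroup N] [Module ℝ N] (S : Finset N) {v : N}
    (hv : v ∈ S) :
    v ∈ {x | ∃ c : N → ℝ, (∀ w, 0 ≤ c w) ∧ x = ∑ w ∈ S, c w • w} := by
  classical
  refine ⟨fun w => if w = v then 1 else 0, fun w => by dsimp only; split <;> norm_num, ?_⟩
  have h1 : ∀ w : N, (if w = v then (1:ℝ) else 0) • w = if w = v then w else 0 :=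
    fun w => by split <;> simp
  calc v = if v ∈ S then v else 0 := by rw [if_pos hv]
    _ = ∑ w ∈ S, if w = v then w else 0 := (Finset.sum_ite_eq' S v id).symm
    _ = ∑ w ∈ S, (fun w => if w = v then (1:ℝ) else 0) w • w :=
        Finset.sum_congr rfl fun w _ => (h1 w).symm


/-- For a face `τ` of a polyhedral cone `σ`, the set `τ* = σ∨ ∩ τ⊥` is a face of `σ∨`,
and `τ ↦ τ*` is an inclusion-reversing bijection between the faces of `σ` and those of
`σ∨`. -/
theorem face_duality {N : Type*} [AddCommGroup N] [Module ℝ N]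
    [FiniteDimensional ℝ N] (σ : Set N) (hσ : IsPolyhedralCone σ) :
    (∀ τ, IsFaceOf τ σ → IsDualFaceOf (dualCone σ ∩ perp τ) (dualCone σ)) ∧
    (∀ τ τ', IsFaceOf τ σ → IsFaceOf τ' σ →
      (τ ⊆ τ' ↔ dualCone σ ∩ perp τ' ⊆ dualCone σ ∩ perp τ)) ∧
    (∀ τ τ', IsFaceOf τ σ → IsFaceOf τ' σ →
      dualCone σ ∩ perp τ = dualCone σ ∩ perp τ' → τ = τ') ∧
    (∀ F, IsDualFaceOf F (dualCone σ) →
      ∃ τ, IsFaceOf τ σ ∧ F = dualCone σ ∩ perp τ) := by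
  classical
  obtain ⟨S, rfl⟩ := hσ
  set σ : Set N := {x | ∃ c : N → ℝ, (∀ v, 0 ≤ c v) ∧ x = ∑ v ∈ S, c v • v} with hσdef
  -- part 2 (needs nothing special)
  have part2 : ∀ τ τ', IsFaceOf τ σ → IsFaceOf τ' σ →
      (τ ⊆ τ' ↔ dualCone σ ∩ perp τ' ⊆ dualCone σ ∩ perp τ) := by
    intro τ τ' hτf hτ'f
    constructor
    · rintro hsub u ⟨huσ, hup⟩
      exact ⟨huσ, fun y hy => hup y (hsub hy)⟩
    · intro hsub y hy
      obtain ⟨m', hm', hτ'⟩ := hτ'f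
      obtain ⟨m, hm, hτ⟩ := hτf
      have hm'mem : m' ∈ dualCone σ ∩ perp τ' :=
        ⟨hm', fun z hz => by rw [hτ'] at hz; exact hz.1⟩
      have hm'y : m' y = 0 := (hsub hm'mem).2 y hy
      have hyσ : y ∈ σ := by rw [hτ] at hy; exact hy.2
      rw [hτ']
      exact ⟨hm'y, hyσ⟩
  refine ⟨?_, part2, ?_, ?_⟩
  · -- part 1
    rintro τ ⟨m, hm, hτ⟩
    set S₀ : Finset N := S.filter (fun v => m v = 0) with hS₀
    set x : N := ∑ v ∈ S₀, v with hx
    have hxσ : x ∈ σ := by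
      refine ⟨fun v => if m v = 0 then 1 else 0, fun v => by dsimp only; split <;> norm_num, ?_⟩
      rw [hx, hS₀, Finset.sum_filter]
      exact Finset.sum_congr rfl fun v _ => by dsimp only; split <;> simp
    have hmx : m x = 0 := by
      rw [hx, map_sum]
      exact Finset.sum_eq_zero fun v hv => (Finset.mem_filter.mp hv).2
    have hxτ : x ∈ τ := by rw [hτ]; exact ⟨hmx, hxσ⟩
    have hxback : x ∈ dualConeBack (dualCone σ) := by
      intro u hu
      rw [hx, map_sum]
      exact Finset.sum_nonneg fun v hv =>
        hu v (self_mem_coneSet S (Finset.mem_filter.mp hv).1)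
    refine ⟨x, hxback, ?_⟩
    ext u
    constructor
    · rintro ⟨huσ, hup⟩
      exact ⟨huσ, hup x hxτ⟩
    · rintro ⟨huσ, hux⟩
      refine ⟨huσ, fun y hy => ?_⟩
      have hS₀zero : ∀ v ∈ S₀, u v = 0 := by
        have hsum : ∑ v ∈ S₀, u v = 0 := by rw [← map_sum, ← hx, hux]
        exact (Finset.sum_eq_zero_iff_of_nonneg fun v hv =>
          huσ v (self_mem_coneSet S (Finset.mem_filter.mp hv).1)).mp hsum
      rw [hτ] at hy
      obtain ⟨hmy0, c, hc, rfl⟩ := hy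
      have hmy : m (∑ v ∈ S, c v • v) = 0 := hmy0
      rw [dualApply_sum] at hmy ⊢
      have hterm : ∀ v ∈ S, c v * m v = 0 :=
        (Finset.sum_eq_zero_iff_of_nonneg fun v hv =>
          mul_nonneg (hc v) (hm v (self_mem_coneSet S hv))).mp hmy
      refine Finset.sum_eq_zero fun v hv => ?_
      by_cases hmv : m v = 0
      · rw [hS₀zero v (Finset.mem_filter.mpr ⟨hv, hmv⟩), mul_zero]
      · rcases mul_eq_zero.mp (hterm v hv) with h | h
        · rw [h, zero_mul]
        · exact absurd h hmv
  · -- part 3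
    intro τ τ' hτf hτ'f heq
    apply Set.Subset.antisymm
    · exact (part2 τ τ' hτf hτ'f).mpr (heq ▸ Set.Subset.rfl)
    · exact (part2 τ' τ hτ'f hτf).mpr (heq ▸ Set.Subset.rfl)
  · -- part 4
    rintro F ⟨x, hxback, hFeq⟩
    have hdual_of : ∀ u : Module.Dual ℝ N, (∀ v ∈ S, 0 ≤ u v) → u ∈ dualCone σ := by
      rintro u hu y ⟨c, hc, rfl⟩
      rw [dualApply_sum]
      exact Finset.sum_nonneg fun v hv => mul_nonneg (hc v) (hu v hv)
    have hxσ : x ∈ σ := farkas S x (fun u hu => hxback u (hdual_of u hu))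
    have h0F : (0 : Module.Dual ℝ N) ∈ F := by
      rw [hFeq]; exact ⟨fun v _ => le_refl 0, rfl⟩
    have haddF : ∀ u u' : Module.Dual ℝ N, u ∈ F → u' ∈ F → u + u' ∈ F := by
      intro u u' hu hu'
      rw [hFeq] at hu hu' ⊢
      exact ⟨fun v hv => add_nonneg (hu.1 v hv) (hu'.1 v hv), by
        simp [LinearMap.add_apply, hu.2, hu'.2]⟩
    set T : Finset N := S.filter (fun v => ∃ u ∈ F, u v ≠ 0) with hT
    set w : N → Module.Dual ℝ N :=
      fun v => if h : ∃ u ∈ F, u v ≠ 0 then h.choose else 0 with hw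
    have hwF : ∀ v ∈ T, w v ∈ F ∧ (w v) v ≠ 0 := by
      intro v hv
      have hex := (Finset.mem_filter.mp hv).2
      rw [hw]; dsimp only
      rw [dif_pos hex]
      exact ⟨hex.choose_spec.1, hex.choose_spec.2⟩
    set m : Module.Dual ℝ N := ∑ v ∈ T, w v with hm
    have hmF : m ∈ F :=
      Finset.sum_induction w (· ∈ F) haddF h0F (fun v hv => (hwF v hv).1)
    have hmF' := hmF
    rw [hFeq] at hmF'
    have hmσ : m ∈ dualCone σ := hmF'.1
    have hFσ : ∀ u ∈ F, u ∈ dualCone σ := by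
      intro u hu; rw [hFeq] at hu; exact hu.1
    have hmpos : ∀ v ∈ T, 0 < m v := by
      intro v hv
      have hvσ : v ∈ σ := self_mem_coneSet S (Finset.mem_filter.mp hv).1
      have hsum : m v = ∑ v' ∈ T, (w v') v := by rw [hm, LinearMap.sum_apply]
      rw [hsum]
      refine Finset.sum_pos' (fun v' hv' => hFσ _ (hwF v' hv').1 v hvσ) ⟨v, hv, ?_⟩
      exact lt_of_le_of_ne (hFσ _ (hwF v hv).1 v hvσ) (Ne.symm (hwF v hv).2)
    have hkey : ∀ y, y ∈ σ → m y = 0 → ∀ u ∈ F, u y = 0 := by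
      rintro y ⟨c, hc, rfl⟩ hmy u huF
      rw [dualApply_sum] at hmy ⊢
      have hterm : ∀ v ∈ S, c v * m v = 0 :=
        (Finset.sum_eq_zero_iff_of_nonneg fun v hv =>
          mul_nonneg (hc v) (hmσ v (self_mem_coneSet S hv))).mp hmy
      refine Finset.sum_eq_zero fun v hv => ?_
      by_cases hvT : v ∈ T
      · rcases mul_eq_zero.mp (hterm v hv) with h | h
        · rw [h, zero_mul]
        · exact absurd h (hmpos v hvT).ne'
      · have huv : u v = 0 := by
          by_contra hne
          exact hvT (Finset.mem_filter.mpr ⟨hv, u, huF, hne⟩)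
        rw [huv, mul_zero]
    refine ⟨{v | m v = 0} ∩ σ, ⟨m, hmσ, rfl⟩, ?_⟩
    ext u
    constructor
    · intro huF
      exact ⟨hFσ u huF, fun y hy => hkey y hy.2 hy.1 u huF⟩
    · rintro ⟨huσ, hup⟩
      rw [hFeq]
      exact ⟨huσ, hup x ⟨hmF'.2, hxσ⟩⟩
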